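/- Let K be a field with char K ≠ 2 and char K ≠ 3, and let H ∈ K[x_1,…,x_n]^n be cubic homogeneous with JH nilpotent and rk JH = 1. Then there exists T ∈ GL_n(K) such that H̃ := T⁻¹·H(Tx) satisfies H̃_1 ∈ K[x_2,x_3,…,x_n] and H̃_2 = H̃_3 = ⋯ = H̃_n = 0. -/

import Mathlib

open MvPolynomial
open scoped Matrix
open MvPolynomial

section Aux
variable {K : Type*} [Field K] {σ : Type*}

lemma cast_ne_zero_of_char (h2 : ringChar K ≠ 2) (h3 : ringChar K ≠ 3) :
    ∀ k : ℕ, 1 ≤ k → k ≤ 3 → (k : K) ≠ 0 := by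
  intro k hk1 hk3 h
  have hdvd : ringChar K ∣ k := ringChar.dvd h
  interval_cases k
  · exact one_ne_zero (by exact_mod_cast h)
  · rcases (Nat.prime_two.eq_one_or_self_of_dvd _ hdvd) with h1 | h1
    · exact CharP.ringChar_ne_one h1
    · exact h2 h1
  · rcases (Nat.prime_three.eq_one_or_self_of_dvd _ hdvd) with h1 | h1
    · exact CharP.ringChar_ne_one h1
    · exact h3 h1

lemma coeff_pderiv' (j : σ) (f : MvPolynomial σ K) (m : σ →₀ ℕ) :
    coeff m (pderiv j f) = (m j + 1 : ℕ) * coeff (m + Finsupp.single j 1) f := by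
  classical
  induction f using MvPolynomial.induction_on' with
  | monomial s a =>
    by_cases hs : s = m + Finsupp.single j 1
    · subst hs
      rw [pderiv_monomial]
      have h1 : m + Finsupp.single j 1 - Finsupp.single j 1 = m := by
        ext k; by_cases hk : k = j
        · subst hk; simp [Finsupp.add_apply, Finsupp.tsub_apply, Finsupp.single_apply]
        · have hk' : j ≠ k := fun h => hk h.symm
          simp [Finsupp.add_apply, Finsupp.tsub_apply, Finsupp.single_apply, hk']
      have h2 : (m + Finsupp.single j 1 : σ →₀ ℕ) j = m j + 1 := by
        simp [Finsupp.add_apply, Finsupp.single_apply]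
      simp [h1, h2, coeff_monomial, mul_comm]
    · rw [pderiv_monomial, coeff_monomial, coeff_monomial, if_neg hs, mul_zero]
      by_cases hd : s - Finsupp.single j 1 = m
      · rw [if_pos hd]
        have hsj : s j = 0 := by
          by_contra hsj
          apply hs
          ext k; by_cases hk : k = j
          · subst hk; subst hd
            simp [Finsupp.add_apply, Finsupp.tsub_apply, Finsupp.single_apply]
            omega
          · subst hd
            have hk' : j ≠ k := fun h => hk h.symm
            simp [Finsupp.add_apply, Finsupp.tsub_apply, Finsupp.single_apply, hk']
        simp [hsj]
      · rw [if_neg hd]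
  | add p q hp hq => simp [hp, hq, mul_add]

lemma coeff_pderiv_sub (j : σ) (f : MvPolynomial σ K) (s : σ →₀ ℕ) (h : s j ≠ 0) :
    coeff (s - Finsupp.single j 1) (pderiv j f) = (s j : K) * coeff s f := by
  classical
  rw [coeff_pderiv']
  have h1 : s - Finsupp.single j 1 + Finsupp.single j 1 = s := by
    ext k; by_cases hk : k = j
    · subst hk
      simp [Finsupp.add_apply, Finsupp.tsub_apply, Finsupp.single_apply]
      omega
    · have hk' : j ≠ k := fun h => hk h.symm
      simp [Finsupp.add_apply, Finsupp.tsub_apply, Finsupp.single_apply, hk']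
  have h2 : (s - Finsupp.single j 1 : σ →₀ ℕ) j + 1 = s j := by
    simp [Finsupp.tsub_apply, Finsupp.single_apply]
    omega
  rw [h1, h2]

lemma isHomogeneous_iff_degree {f : MvPolynomial σ K} {d : ℕ} :
    f.IsHomogeneous d ↔ ∀ m ∈ f.support, Finsupp.degree m = d := by
  constructor
  · intro h m hm
    rw [Finsupp.degree_eq_weight_one]
    exact h (mem_support_iff.mp hm)
  · intro h m hm
    have := h m (mem_support_iff.mpr hm)
    rw [Finsupp.degree_eq_weight_one] at this
    exact this

lemma degree_add_single (m : σ →₀ ℕ) (j : σ) :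
    Finsupp.degree (m + Finsupp.single j 1) = Finsupp.degree m + 1 := by
  classical
  rw [Finsupp.degree_eq_weight_one, map_add]
  simp [Finsupp.weight_apply, Finsupp.sum_single_index]

lemma IsHomogeneous.pderiv' {f : MvPolynomial σ K} {d : ℕ} (hf : f.IsHomogeneous (d + 1))
    (j : σ) : (pderiv j f).IsHomogeneous d := by
  classical
  rw [isHomogeneous_iff_degree]
  intro m hm
  have h := mem_support_iff.mp hm
  rw [coeff_pderiv'] at h
  have h2 : coeff (m + Finsupp.single j 1) f ≠ 0 := by
    intro h0; rw [h0, mul_zero] at h; exact h rfl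
  have := (isHomogeneous_iff_degree.mp hf) _ (mem_support_iff.mpr h2)
  rw [degree_add_single] at this
  omega

lemma exists_pderiv_ne_zero {f : MvPolynomial σ K} {d : ℕ} (hf : f ≠ 0)
    (hd : f.IsHomogeneous (d + 1)) (hc : ∀ k : ℕ, 1 ≤ k → k ≤ d + 1 → (k : K) ≠ 0) :
    ∃ j, pderiv j f ≠ 0 := by
  classical
  obtain ⟨s, hs⟩ : ∃ s, coeff s f ≠ 0 := exists_coeff_ne_zero hf
  have hdeg : Finsupp.degree s = d + 1 :=
    (isHomogeneous_iff_degree.mp hd) s (mem_support_iff.mpr hs)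
  have hsne : s ≠ 0 := by
    intro h0; rw [h0] at hdeg; simp [map_zero] at hdeg
  obtain ⟨a, ha⟩ : ∃ a, s a ≠ 0 := by
    by_contra h
    push_neg at h
    exact hsne (Finsupp.ext fun a => h a)
  refine ⟨a, ?_⟩
  intro h0
  have := coeff_pderiv_sub a f s ha
  rw [h0, coeff_zero] at this
  have hcast : (s a : K) ≠ 0 := by
    apply hc
    · omega
    · have := Finsupp.le_degree a s; omega
  exact hcast (by
    rcases mul_eq_zero.mp this.symm with h | h
    · exact h
    · exact absurd h hs)

lemma IsHomogeneous.eq_C_of_zero {f : MvPolynomial σ K} (hf : f.IsHomogeneous 0) :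
    f = C (coeff 0 f) := by
  classical
  ext m
  by_cases hm : m = 0
  · subst hm; simp
  · rw [coeff_C, if_neg (Ne.symm hm)]
    apply hf.coeff_eq_zero
    intro hdeg
    apply hm
    ext a
    have := Finsupp.le_degree a m
    simp only [Finsupp.coe_zero, Pi.zero_apply]
    omega

end Aux

section Aux2
variable {K : Type*} [Field K] {n : ℕ}

lemma euler_monomial (s : Fin n →₀ ℕ) (a : K) :
    ∑ j : Fin n, X j * pderiv j (monomial s a) =
      monomial s (a * ((Finsupp.degree s : ℕ) : K)) := by
  classical
  have key : ∀ j : Fin n, X j * pderiv j (monomial s a) = monomial s (a * (s j : K)) := by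
    intro j
    rw [pderiv_monomial]
    by_cases hj : s j = 0
    · simp [hj]
    · have h1 : s - Finsupp.single j 1 + Finsupp.single j 1 = s := by
        ext k; by_cases hk : k = j
        · subst hk
          simp [Finsupp.add_apply, Finsupp.tsub_apply, Finsupp.single_apply]
          omega
        · have hk' : j ≠ k := fun h => hk h.symm
          simp [Finsupp.add_apply, Finsupp.tsub_apply, Finsupp.single_apply, hk']
      have hX : (X j : MvPolynomial (Fin n) K) = monomial (Finsupp.single j 1) 1 := by
        rw [← MvPolynomial.X_pow_eq_monomial, pow_one]
      rw [hX, MvPolynomial.monomial_mul, one_mul, add_comm, h1]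
  simp_rw [key]
  rw [← map_sum (monomial s)]
  congr 1
  rw [← Finset.mul_sum]
  congr 1
  have hdd : ∑ j : Fin n, (s j : K) = ((Finsupp.degree s : ℕ) : K) := by
    have h0 : Finsupp.degree s = ∑ j : Fin n, s j := by
      rw [Finsupp.degree]
      exact Finset.sum_subset (Finset.subset_univ _)
        (fun x _ hx => Finsupp.notMem_support_iff.mp hx)
    rw [h0]
    push_cast
    rfl
  rw [hdd]

lemma euler_identity {f : MvPolynomial (Fin n) K} {d : ℕ} (hf : f.IsHomogeneous d) :
    ∑ j : Fin n, X j * pderiv j f = C ((d : ℕ) : K) * f := by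
  classical
  conv_lhs => rw [f.as_sum]
  have : ∀ j : Fin n, X j * pderiv j (∑ s ∈ f.support, monomial s (coeff s f)) =
      ∑ s ∈ f.support, X j * pderiv j (monomial s (coeff s f)) := by
    intro j
    rw [map_sum (pderiv j), Finset.mul_sum]
  simp_rw [this]
  rw [Finset.sum_comm]
  have : ∀ s ∈ f.support, ∑ j : Fin n, X j * pderiv j (monomial s (coeff s f)) =
      C ((d : ℕ) : K) * monomial s (coeff s f) := by
    intro s hs
    rw [euler_monomial]
    have hdeg : Finsupp.degree s = d := by
      rw [Finsupp.degree_eq_weight_one]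
      exact hf (mem_support_iff.mp hs)
    rw [hdeg, C_mul_monomial, mul_comm]
  rw [Finset.sum_congr rfl this, ← Finset.mul_sum, ← f.as_sum]

lemma pderiv_aeval_eq (g : Fin n → MvPolynomial (Fin n) K) (j : Fin n)
    (f : MvPolynomial (Fin n) K) :
    pderiv j (aeval g f) = ∑ k : Fin n, aeval g (pderiv k f) * pderiv j (g k) := by
  classical
  induction f using MvPolynomial.induction_on with
  | C a => simp
  | add p q hp hq =>
    simp only [map_add, hp, hq, add_mul, ← Finset.sum_add_distrib]
  | mul_X p i hp =>
    simp only [map_mul, aeval_X, pderiv_mul, hp]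
    simp_rw [map_add, map_mul, aeval_X, add_mul, Finset.sum_add_distrib]
    congr 1
    · rw [Finset.sum_mul]
      exact Finset.sum_congr rfl (fun k _ => by ring)
    · rw [Finset.sum_eq_single i]
      · simp
      · intro k _ hk
        rw [pderiv_X_of_ne (Ne.symm hk)]
        simp
      · simp

end Aux2

section Aux3
variable {K : Type*} [Field K] {n : ℕ}

lemma rank_le_one_minors {m n : ℕ} {L : Type*} [Field L] (N : Matrix (Fin m) (Fin n) L)
    (h : N.rank ≤ 1) (i l : Fin m) (j k : Fin n) : N i j * N l k = N i k * N l j := by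
  classical
  set W := LinearMap.range N.mulVecLin with hW
  have hrk : Module.rank L W ≤ 1 := by
    have : (Matrix.rank N : Cardinal) = Module.rank L W := Module.finrank_eq_rank L W
    rw [← this]
    exact_mod_cast h
  obtain ⟨v, hv⟩ := (rank_submodule_le_one_iff' W).mp hrk
  have hcol : ∀ j : Fin n, (fun i => N i j) ∈ W := by
    intro j
    refine ⟨Pi.single j 1, ?_⟩
    ext i
    simp [Matrix.mulVecLin_apply, Matrix.mulVec_single]
  obtain ⟨a, ha⟩ := Submodule.mem_span_singleton.mp (hv (hcol j))
  obtain ⟨b, hb⟩ := Submodule.mem_span_singleton.mp (hv (hcol k))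
  have hj : ∀ i, N i j = a * v i := fun i => (congr_fun ha i).symm
  have hk : ∀ i, N i k = b * v i := fun i => (congr_fun hb i).symm
  rw [hj, hk, hj, hk]
  ring

lemma exists_glT (z i0 : Fin n) (c : Fin n → K) (hc : c i0 = 1) :
    ∃ T : Matrix.GeneralLinearGroup (Fin n) K,
      ∀ k, (T : Matrix (Fin n) (Fin n) K) k z = c k := by
  classical
  set σp := Equiv.swap z i0 with hσp
  set w : Fin n → K := fun m => c (σp m) - (Pi.single z 1 : Fin n → K) m with hw
  have hwz : w z = 0 := by
    simp [hw, hσp, Equiv.swap_apply_left, hc, Pi.single_eq_same]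
  set N : Matrix (Fin n) (Fin n) K := Matrix.vecMulVec w (Pi.single z 1) with hN
  have hNN : N * N = 0 := by
    ext k l
    simp only [Matrix.mul_apply, Matrix.vecMulVec_apply, hN, Matrix.zero_apply]
    rw [Finset.sum_eq_single z]
    · rw [hwz]; ring
    · intro m _ hm
      simp [Pi.single_eq_of_ne hm]
    · simp
  set P : Matrix (Fin n) (Fin n) K := Matrix.of fun k l => if l = σp k then 1 else 0 with hP
  have hPmul : ∀ M : Matrix (Fin n) (Fin n) K,
      P * M = Matrix.of fun k l => M (σp k) l := by
    intro M
    ext k l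
    simp only [Matrix.mul_apply, Matrix.of_apply, hP]
    rw [Finset.sum_eq_single (σp k)]
    · simp
    · intro m _ hm
      rw [if_neg hm, zero_mul]
    · simp
  have hss : ∀ x, σp (σp x) = x := fun x => Equiv.swap_apply_self _ _ x
  have hPP : P * P = 1 := by
    rw [hPmul]
    ext k l
    simp [hP, Matrix.one_apply, hss, eq_comm]
  have hfact : (1 + N) * (1 - N) = 1 := by
    have : (1 + N) * (1 - N) = 1 - N * N := by noncomm_ring
    rw [this, hNN, sub_zero]
  have hfact' : (1 - N) * (1 + N) = 1 := by
    have : (1 - N) * (1 + N) = 1 - N * N := by noncomm_ring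
    rw [this, hNN, sub_zero]
  refine ⟨⟨P * (1 + N), (1 - N) * P, ?_, ?_⟩, ?_⟩
  · show P * (1 + N) * ((1 - N) * P) = 1
    rw [Matrix.mul_assoc, ← Matrix.mul_assoc (1 + N), hfact, Matrix.one_mul, hPP]
  · show (1 - N) * P * (P * (1 + N)) = 1
    rw [Matrix.mul_assoc, ← Matrix.mul_assoc P, hPP, Matrix.one_mul, hfact']
  · intro k
    show (P * (1 + N)) k z = c k
    rw [hPmul]
    simp only [Matrix.of_apply, Matrix.add_apply, Matrix.one_apply, hN,
      Matrix.vecMulVec_apply, hw]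
    rw [Pi.single_eq_same, hss]
    by_cases hkz : σp k = z
    · rw [hkz]
      simp
    · rw [if_neg hkz, Pi.single_eq_of_ne hkz]
      ring

lemma support_exponent_eq_zero (h2 : ringChar K ≠ 2) (h3 : ringChar K ≠ 3)
    {f : MvPolynomial (Fin n) K} {j : Fin n}
    (hdeg : f.totalDegree ≤ 3) (hp : pderiv j f = 0) :
    ∀ m ∈ f.support, m j = 0 := by
  intro m hm
  by_contra hmj
  have h := coeff_pderiv_sub j f m hmj
  rw [hp, coeff_zero] at h
  have h1 : m j ≤ 3 := by
    have ha : Finsupp.degree m ≤ f.totalDegree := by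
      rw [Finsupp.degree]
      exact le_totalDegree hm
    have := Finsupp.le_degree j m
    omega
  have hcast : ((m j : ℕ) : K) ≠ 0 :=
    cast_ne_zero_of_char h2 h3 _ (by omega) h1
  rcases mul_eq_zero.mp h.symm with h' | h'
  · exact hcast h'
  · exact mem_support_iff.mp hm h'

end Aux3

/-- The Jacobian matrix of a polynomial map. -/
noncomputable def jac {K : Type*} [CommRing K] {m n : ℕ}
    (H : Fin m → MvPolynomial (Fin n) K) :
    Matrix (Fin m) (Fin n) (MvPolynomial (Fin n) K) :=
  Matrix.of fun i j => pderiv j (H i)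

/-- The rank of the Jacobian matrix, taken over the rational function field. -/
noncomputable def jacRank {K : Type*} [Field K] {m n : ℕ}
    (H : Fin m → MvPolynomial (Fin n) K) : ℕ :=
  ((jac H).map (algebraMap (MvPolynomial (Fin n) K)
    (FractionRing (MvPolynomial (Fin n) K)))).rank

/-- The polynomial map `S · H(Tx)`. -/
noncomputable def applyST {K : Type*} [CommRing K] {m n : ℕ}
    (S : Matrix (Fin m) (Fin m) K) (T : Matrix (Fin n) (Fin n) K)
    (H : Fin m → MvPolynomial (Fin n) K) : Fin m → MvPolynomial (Fin n) K :=
  fun i => ∑ j, C (S i j) * aeval (fun k => ∑ l, C (T k l) * X l) (H j)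

/-- If `char K ≠ 2, 3` and `H ∈ K[x]ⁿ` is cubic homogeneous with `JH` nilpotent and
`rk JH = 1`, then after a linear conjugation `H̃ = T⁻¹·H(Tx)` one has
`H̃₁ ∈ K[x₂,…,xₙ]` and `H̃₂ = ⋯ = H̃ₙ = 0`. -/
theorem cubic_nilpotent_rank_one_normal_form {K : Type*} [Field K]
    (h2 : ringChar K ≠ 2) (h3 : ringChar K ≠ 3)
    {n : ℕ} (H : Fin n → MvPolynomial (Fin n) K)
    (hhom : ∀ i, (H i).IsHomogeneous 3)
    (hnil : IsNilpotent (jac H)) (hrk : jacRank H = 1) :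
    ∃ hn : 0 < n, ∃ T : Matrix.GeneralLinearGroup (Fin n) K,
      (applyST ((T⁻¹ : Matrix.GeneralLinearGroup (Fin n) K) : Matrix (Fin n) (Fin n) K)
          (T : Matrix (Fin n) (Fin n) K) H ⟨0, hn⟩ ∈
        supported K {j : Fin n | j ≠ ⟨0, hn⟩}) ∧
      ∀ i : Fin n, 1 ≤ (i : ℕ) →
        applyST ((T⁻¹ : Matrix.GeneralLinearGroup (Fin n) K) : Matrix (Fin n) (Fin n) K)
          (T : Matrix (Fin n) (Fin n) K) H i = 0 := by
  classical
  unfold jacRank at hrk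
  set φ := algebraMap (MvPolynomial (Fin n) K) (FractionRing (MvPolynomial (Fin n) K)) with hφ
  have hφinj : Function.Injective φ :=
    IsFractionRing.injective (MvPolynomial (Fin n) K) (FractionRing (MvPolynomial (Fin n) K))
  -- n is positive
  have hn : 0 < n := by
    have := Matrix.rank_le_card_width ((jac H).map φ)
    rw [hrk, Fintype.card_fin] at this
    omega
  -- some entry of the Jacobian is nonzero
  have hent : ∃ i0 j0, pderiv j0 (H i0) ≠ 0 := by
    by_contra h
    push_neg at h
    have hz : jac H = 0 := by
      apply Matrix.ext
      intro i j
      exact h i j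
    rw [hz] at hrk
    rw [Matrix.map_zero φ (map_zero φ), Matrix.rank_zero] at hrk
    exact absurd hrk (by norm_num)
  obtain ⟨i0, j0, hangle⟩ := hent
  have hf0 : H i0 ≠ 0 := fun h => hangle (by rw [h]; simp)
  -- all 2×2 minors of the Jacobian vanish
  have hminor : ∀ i l j k,
      pderiv j (H i) * pderiv k (H l) = pderiv k (H i) * pderiv j (H l) := by
    intro i l j k
    apply hφinj
    have := rank_le_one_minors ((jac H).map φ) (le_of_eq hrk) i l j k
    simpa [jac, Matrix.map_apply, map_mul] using this
  -- Euler identity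
  have heuler : ∀ i, ∑ j, X j * pderiv j (H i) = C ((3 : ℕ) : K) * H i :=
    fun i => euler_identity (hhom i)
  have hcast : ∀ k : ℕ, 1 ≤ k → k ≤ 3 → (k : K) ≠ 0 := cast_ne_zero_of_char h2 h3
  have hC3 : (C ((3 : ℕ) : K) : MvPolynomial (Fin n) K) ≠ 0 := by
    rw [Ne, MvPolynomial.C_eq_zero]
    exact hcast 3 (by norm_num) (by norm_num)
  -- first order relation
  have hR1 : ∀ i k, H i * pderiv k (H i0) = H i0 * pderiv k (H i) := by
    intro i k
    apply mul_left_cancel₀ hC3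
    have hs : (∑ j, X j * pderiv j (H i)) * pderiv k (H i0)
        = (∑ j, X j * pderiv j (H i0)) * pderiv k (H i) := by
      rw [Finset.sum_mul, Finset.sum_mul]
      refine Finset.sum_congr rfl fun j _ => ?_
      linear_combination (X j : MvPolynomial (Fin n) K) * hminor i i0 j k
    linear_combination (-(pderiv k (H i0))) * heuler i + (pderiv k (H i)) * heuler i0 + hs
  -- second order relation
  have hR2 : ∀ i k l,
      H i * pderiv l (pderiv k (H i0)) = H i0 * pderiv l (pderiv k (H i)) := by
    intro i k l
    have hd := congrArg (pderiv l) (hR1 i k)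
    rw [pderiv_mul, pderiv_mul] at hd
    linear_combination hd - hminor i i0 l k
  -- third order relation
  have hR3 : ∀ i k l m, H i * pderiv m (pderiv l (pderiv k (H i0)))
      = H i0 * pderiv m (pderiv l (pderiv k (H i))) := by
    intro i k l m
    have hg : pderiv m (H i) * pderiv l (pderiv k (H i0))
        = pderiv m (H i0) * pderiv l (pderiv k (H i)) := by
      apply mul_left_cancel₀ hf0
      linear_combination (pderiv m (H i0)) * hR2 i k l
        - (pderiv l (pderiv k (H i0))) * hR1 i m
    have hd := congrArg (pderiv m) (hR2 i k l)
    rw [pderiv_mul, pderiv_mul] at hd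
    linear_combination hd - hg
  -- a nonzero constant third derivative of H i0
  obtain ⟨a, ha⟩ := exists_pderiv_ne_zero hf0
    (show (H i0).IsHomogeneous (2 + 1) from hhom i0)
    (fun k h1 h2' => hcast k h1 (by omega))
  have hhom2 : (pderiv a (H i0)).IsHomogeneous (1 + 1) :=
    IsHomogeneous.pderiv' (show (H i0).IsHomogeneous (1 + 1 + 1) from hhom i0) a
  obtain ⟨b, hb⟩ := exists_pderiv_ne_zero ha hhom2 (fun k h1 h2' => hcast k h1 (by omega))
  have hhom1 : (pderiv b (pderiv a (H i0))).IsHomogeneous (0 + 1) :=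
    IsHomogeneous.pderiv' hhom2 b
  obtain ⟨d, hd3⟩ := exists_pderiv_ne_zero hb hhom1 (fun k h1 h2' => hcast k h1 (by omega))
  have hhom0 : (pderiv d (pderiv b (pderiv a (H i0)))).IsHomogeneous 0 :=
    IsHomogeneous.pderiv' hhom1 d
  set γ : K := coeff 0 (pderiv d (pderiv b (pderiv a (H i0)))) with hγdef
  have hγC : pderiv d (pderiv b (pderiv a (H i0))) = C γ :=
    IsHomogeneous.eq_C_of_zero hhom0
  have hγ : γ ≠ 0 := fun h => hd3 (by rw [hγC, h, map_zero])
  have hCγ : (C γ : MvPolynomial (Fin n) K) ≠ 0 := by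
    rw [Ne, MvPolynomial.C_eq_zero]; exact hγ
  -- all components are constant multiples of H i0
  set δ : Fin n → K := fun i => coeff 0 (pderiv d (pderiv b (pderiv a (H i)))) with hδdef
  have hδC : ∀ i, pderiv d (pderiv b (pderiv a (H i))) = C (δ i) := by
    intro i
    refine IsHomogeneous.eq_C_of_zero ?_
    exact IsHomogeneous.pderiv' (IsHomogeneous.pderiv'
      (IsHomogeneous.pderiv' (show (H i).IsHomogeneous (2 + 1) from hhom i) a) b) d
  set cvec : Fin n → K := fun i => δ i * γ⁻¹ with hcvecdef
  have hHc : ∀ i, H i = C (cvec i) * H i0 := by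
    intro i
    have h := hR3 i a b d
    rw [hγC, hδC i] at h
    have hcγ : C (cvec i) * C γ = (C (δ i) : MvPolynomial (Fin n) K) := by
      rw [← map_mul]
      congr 1
      field_simp [hcvecdef]
      simp [hcvecdef, hγ]
    apply mul_right_cancel₀ hCγ
    linear_combination h - (H i0) * hcγ
  have hc0 : cvec i0 = 1 := by
    have hδγ : δ i0 = γ := by
      have : (C (δ i0) : MvPolynomial (Fin n) K) = C γ := by rw [← hδC i0, hγC]
      exact MvPolynomial.C_injective _ _ this
    rw [hcvecdef]
    simp only [hδγ]
    field_simp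
  -- the trace of the Jacobian vanishes
  have htr : ∑ i, C (cvec i) * pderiv i (H i0) = (0 : MvPolynomial (Fin n) K) := by
    have h1 : Matrix.trace (jac H) = ∑ i, C (cvec i) * pderiv i (H i0) := by
      rw [Matrix.trace]
      refine Finset.sum_congr rfl fun i _ => ?_
      show (jac H) i i = _
      show pderiv i (H i) = _
      conv_lhs => rw [hHc i]
      rw [pderiv_C_mul]
    have h2 : IsNilpotent (Matrix.trace (jac H)) :=
      Matrix.isNilpotent_trace_of_isNilpotent hnil
    obtain ⟨k, hk⟩ := h2
    have hk0 : k ≠ 0 := by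
      intro h0
      rw [h0, pow_zero] at hk
      exact one_ne_zero hk
    rw [← h1]
    exact (pow_eq_zero_iff hk0).mp hk
  -- construct the linear map T
  obtain ⟨T, hTcol⟩ := exists_glT (⟨0, hn⟩ : Fin n) i0 cvec hc0
  -- the substituted polynomial
  have hinv : ((T⁻¹ : Matrix.GeneralLinearGroup (Fin n) K) : Matrix (Fin n) (Fin n) K) *
      (T : Matrix (Fin n) (Fin n) K) = 1 := T.inv_mul
  have hTv : (T : Matrix (Fin n) (Fin n) K) *ᵥ (Pi.single (⟨0, hn⟩ : Fin n) (1 : K)) = cvec := by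
    ext k
    simp [Matrix.mulVec_single, hTcol k]
  have happ : ∀ i, applyST
      ((T⁻¹ : Matrix.GeneralLinearGroup (Fin n) K) : Matrix (Fin n) (Fin n) K)
      (T : Matrix (Fin n) (Fin n) K) H i
      = C ((Pi.single (⟨0, hn⟩ : Fin n) (1 : K) : Fin n → K) i) *
        aeval (fun k => ∑ l, C ((T : Matrix (Fin n) (Fin n) K) k l) * X l) (H i0) := by
    intro i
    set Ti := ((T⁻¹ : Matrix.GeneralLinearGroup (Fin n) K) : Matrix (Fin n) (Fin n) K) with hTi
    set gg : Fin n → MvPolynomial (Fin n) K :=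
      fun k => ∑ l, C ((T : Matrix (Fin n) (Fin n) K) k l) * X l with hgg
    show (∑ j, C (Ti i j) * aeval gg (H j)) = _
    have step1 : ∀ j : Fin n, C (Ti i j) * aeval gg (H j)
        = C (Ti i j * cvec j) * aeval gg (H i0) := by
      intro j
      rw [hHc j]
      simp only [map_mul, aeval_C, MvPolynomial.algebraMap_eq]
      ring
    rw [Finset.sum_congr rfl (fun j _ => step1 j), ← Finset.sum_mul, ← map_sum]
    congr 2
    have h1 : (∑ j, Ti i j * cvec j) = (Ti *ᵥ cvec) i := by
      simp [Matrix.mulVec, dotProduct]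
    rw [h1, ← hTv, Matrix.mulVec_mulVec, hinv, Matrix.one_mulVec]
  -- homogeneity and degree of the substituted polynomial
  have hgghom : ∀ k : Fin n,
      ((fun k => ∑ l, C ((T : Matrix (Fin n) (Fin n) K) k l) * X l) k :
        MvPolynomial (Fin n) K).IsHomogeneous 1 := by
    intro k
    exact MvPolynomial.IsHomogeneous.sum _ _ _
      (fun l _ => MvPolynomial.isHomogeneous_C_mul_X _ _)
  have hFhom : (aeval (fun k => ∑ l, C ((T : Matrix (Fin n) (Fin n) K) k l) * X l)
      (H i0)).IsHomogeneous 3 := by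
    have := (hhom i0).aeval _ hgghom
    simpa using this
  have hFdeg : (aeval (fun k => ∑ l, C ((T : Matrix (Fin n) (Fin n) K) k l) * X l)
      (H i0)).totalDegree ≤ 3 := hFhom.totalDegree_le
  -- the partial derivative in the first variable vanishes
  have hpz : pderiv (⟨0, hn⟩ : Fin n)
      (aeval (fun k => ∑ l, C ((T : Matrix (Fin n) (Fin n) K) k l) * X l) (H i0)) = 0 := by
    rw [pderiv_aeval_eq]
    have hgz : ∀ k : Fin n, pderiv (⟨0, hn⟩ : Fin n)
        ((fun k => ∑ l, C ((T : Matrix (Fin n) (Fin n) K) k l) * X l) k) = C (cvec k) := by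
      intro k
      show pderiv (⟨0, hn⟩ : Fin n) (∑ l, C ((T : Matrix (Fin n) (Fin n) K) k l) * X l) = _
      rw [map_sum]
      rw [Finset.sum_eq_single (⟨0, hn⟩ : Fin n)]
      · rw [pderiv_C_mul, pderiv_X_self, mul_one, hTcol k]
      · intro l _ hl
        rw [pderiv_C_mul, pderiv_X_of_ne hl, mul_zero]
      · intro h
        exact absurd (Finset.mem_univ _) h
    simp_rw [hgz]
    have step : ∀ k : Fin n,
        aeval (fun k => ∑ l, C ((T : Matrix (Fin n) (Fin n) K) k l) * X l)
          (pderiv k (H i0)) * C (cvec k)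
        = aeval (fun k => ∑ l, C ((T : Matrix (Fin n) (Fin n) K) k l) * X l)
          (C (cvec k) * pderiv k (H i0)) := by
      intro k
      simp only [map_mul, aeval_C, MvPolynomial.algebraMap_eq]
      ring
    simp_rw [step]
    rw [← map_sum, htr, map_zero]
  have hsupp : ∀ m ∈ (aeval (fun k => ∑ l, C ((T : Matrix (Fin n) (Fin n) K) k l) * X l)
      (H i0)).support, m (⟨0, hn⟩ : Fin n) = 0 :=
    support_exponent_eq_zero h2 h3 hFdeg hpz
  refine ⟨hn, T, ?_, ?_⟩
  · rw [happ ⟨0, hn⟩, Pi.single_eq_same, map_one, one_mul]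
    rw [MvPolynomial.mem_supported]
    intro j hj
    simp only [Set.mem_setOf_eq]
    rw [Finset.mem_coe, MvPolynomial.mem_vars] at hj
    obtain ⟨m, hm, hjm⟩ := hj
    intro hjz
    subst hjz
    rw [Finsupp.mem_support_iff] at hjm
    exact hjm (hsupp m hm)
  · intro i hi
    have hiz : i ≠ (⟨0, hn⟩ : Fin n) := by
      intro h
      rw [h] at hi
      simp at hi
    rw [happ i, Pi.single_eq_of_ne hiz, map_zero, zero_mul]
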